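/- On the open book, suppose m_k > 0 for some leaf k (hence m_{k'} < 0 for all k' ≠ k). Then the Fréchet mean of Q exists, is unique, and equals μ = (k; m_k, μ_{1D}); i.e., it lies in the open leaf S_k with zero-th coordinate m_k. -/

import Mathlib

open MeasureTheory

/-- The open-book distance on `K` copies of the half-space `H = [0,∞) × ℝ^D`. -/
noncomputable def obDist {K D : ℕ} (p q : Fin K × ℝ × EuclideanSpace ℝ (Fin D)) : ℝ :=
  Real.sqrt ((if p.1 = q.1 then (p.2.1 - q.2.1) ^ 2 else (p.2.1 + q.2.1) ^ 2)
    + ‖p.2.2 - q.2.2‖ ^ 2)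

set_option maxHeartbeats 1000000 in
/-- On the open book, if the folded first-coordinate mean `m_k` is positive for
some leaf `k` (hence `m_{k'} < 0` for all other leaves), then the Fréchet mean of `Q` exists,
is unique, and equals `(k; m_k, μ_{1D})`: a point is a minimizer of the Fréchet function iff
it lies in the open leaf `S_k` with zeroth coordinate `m_k` and spine coordinates `μ_{1D}`. -/
theorem stmt8 {K D : ℕ}
    (Q : Measure (Fin K × ℝ × EuclideanSpace ℝ (Fin D))) [IsProbabilityMeasure Q]
    (hae : ∀ᵐ z ∂Q, 0 ≤ z.2.1)
    (h0sq : Integrable (fun z => z.2.1 ^ 2) Q)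
    (h0 : Integrable (fun z => z.2.1) Q)
    (h1sq : Integrable (fun z => ‖z.2.2‖ ^ 2) Q)
    (h1 : Integrable (fun z => z.2.2) Q)
    (m : Fin K → ℝ)
    (hm : ∀ k, m k = ∫ z, (if z.1 = k then z.2.1 else -z.2.1) ∂Q)
    (k₀ : Fin K) (hpos : 0 < m k₀)
    (μ1D : EuclideanSpace ℝ (Fin D)) (hμ : μ1D = ∫ z, z.2.2 ∂Q) :
    (∀ k' ≠ k₀, m k' < 0) ∧
    (∀ p : Fin K × ℝ × EuclideanSpace ℝ (Fin D), 0 ≤ p.2.1 →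
      ((∀ q : Fin K × ℝ × EuclideanSpace ℝ (Fin D), 0 ≤ q.2.1 →
          ∫ z, obDist p z ^ 2 ∂Q ≤ ∫ z, obDist q z ^ 2 ∂Q)
        ↔ (p.1 = k₀ ∧ p.2.1 = m k₀ ∧ p.2.2 = μ1D))) := by
  -- integrability of the folded coordinate
  have hsmeas : ∀ k : Fin K, Measurable
      (fun z : Fin K × ℝ × EuclideanSpace ℝ (Fin D) =>
        if z.1 = k then z.2.1 else -z.2.1) := by
    intro k
    exact Measurable.ite (measurable_fst (measurableSet_singleton k))
      (measurable_fst.comp measurable_snd) (measurable_fst.comp measurable_snd).neg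
  have hs : ∀ k : Fin K, Integrable
      (fun z : Fin K × ℝ × EuclideanSpace ℝ (Fin D) =>
        if z.1 = k then z.2.1 else -z.2.1) Q := by
    intro k
    refine h0.mono (hsmeas k).aestronglyMeasurable (Filter.Eventually.of_forall fun z => ?_)
    split_ifs <;> simp
  -- Part 1
  have part1 : ∀ k' ≠ k₀, m k' < 0 := by
    intro k' hk'
    have hle : m k' + m k₀ ≤ 0 := by
      rw [hm k', hm k₀, ← integral_add (hs k') (hs k₀)]
      refine integral_nonpos_of_ae ?_
      filter_upwards [hae] with z hz
      split_ifs with h1 h2 h2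
      · exact absurd (h1.symm.trans h2) hk'
      · simp only [Pi.zero_apply]; linarith
      · simp only [Pi.zero_apply]; linarith
      · simp only [Pi.zero_apply]; linarith
    linarith
  refine ⟨part1, ?_⟩
  -- key computation of the Fréchet function
  set A : ℝ := ∫ z, z.2.1 ^ 2 ∂Q with hA
  set B : ℝ := ∫ z, ‖z.2.2‖ ^ 2 ∂Q with hB
  have hinner : ∀ v : EuclideanSpace ℝ (Fin D),
      Integrable (fun z : Fin K × ℝ × EuclideanSpace ℝ (Fin D) =>
        (inner ℝ v z.2.2 : ℝ)) Q := fun v => h1.const_inner v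
  have key : ∀ p : Fin K × ℝ × EuclideanSpace ℝ (Fin D),
      ∫ z, obDist p z ^ 2 ∂Q
        = ((p.2.1 - m p.1) ^ 2 - (m p.1) ^ 2 + ‖p.2.2 - μ1D‖ ^ 2)
          + (A + B - ‖μ1D‖ ^ 2) := by
    rintro ⟨k, a, v⟩
    have hcongr : ∫ z, obDist (k, a, v) z ^ 2 ∂Q
        = ∫ z, ((a ^ 2 - 2 * a * (if z.1 = k then z.2.1 else -z.2.1) + z.2.1 ^ 2)
            + (‖v‖ ^ 2 - 2 * (inner ℝ v z.2.2 : ℝ) + ‖z.2.2‖ ^ 2)) ∂Q := by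
      refine integral_congr_ae (Filter.Eventually.of_forall fun z => ?_)
      have hnn : (0:ℝ) ≤ (if (k, a, v).1 = z.1 then ((k, a, v).2.1 - z.2.1) ^ 2
          else ((k, a, v).2.1 + z.2.1) ^ 2) + ‖(k, a, v).2.2 - z.2.2‖ ^ 2 := by
        have : (0:ℝ) ≤ (if (k, a, v).1 = z.1 then ((k, a, v).2.1 - z.2.1) ^ 2
            else ((k, a, v).2.1 + z.2.1) ^ 2) := by split_ifs <;> positivity
        positivity
      simp only [obDist]
      rw [Real.sq_sqrt hnn]
      rw [norm_sub_sq_real]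
      by_cases h : z.1 = k
      · rw [if_pos h.symm, if_pos h]; ring
      · rw [if_neg (Ne.symm h), if_neg h]; ring
    rw [hcongr]
    have Ia : Integrable (fun z : Fin K × ℝ × EuclideanSpace ℝ (Fin D) =>
        2 * a * (if z.1 = k then z.2.1 else -z.2.1)) Q := (hs k).const_mul (2 * a)
    have Ib : Integrable (fun z : Fin K × ℝ × EuclideanSpace ℝ (Fin D) =>
        a ^ 2 - 2 * a * (if z.1 = k then z.2.1 else -z.2.1)) Q := (integrable_const _).sub Ia
    have I1 : Integrable (fun z : Fin K × ℝ × EuclideanSpace ℝ (Fin D) =>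
        a ^ 2 - 2 * a * (if z.1 = k then z.2.1 else -z.2.1) + z.2.1 ^ 2) Q := Ib.add h0sq
    have Ic : Integrable (fun z : Fin K × ℝ × EuclideanSpace ℝ (Fin D) =>
        2 * (inner ℝ v z.2.2 : ℝ)) Q := (hinner v).const_mul 2
    have Id : Integrable (fun z : Fin K × ℝ × EuclideanSpace ℝ (Fin D) =>
        ‖v‖ ^ 2 - 2 * (inner ℝ v z.2.2 : ℝ)) Q := (integrable_const _).sub Ic
    have I2 : Integrable (fun z : Fin K × ℝ × EuclideanSpace ℝ (Fin D) =>
        ‖v‖ ^ 2 - 2 * (inner ℝ v z.2.2 : ℝ) + ‖z.2.2‖ ^ 2) Q := Id.add h1sq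
    rw [integral_add I1 I2, integral_add Ib h0sq,
      integral_sub (integrable_const _) Ia,
      integral_add Id h1sq,
      integral_sub (integrable_const _) Ic,
      integral_const_mul, integral_const_mul, integral_const, integral_const]
    have hμint : ∫ z, (inner ℝ v z.2.2 : ℝ) ∂Q = (inner ℝ v μ1D : ℝ) := by
      have := (innerSL ℝ v).integral_comp_comm h1
      simpa [hμ] using this
    rw [hμint, ← hm k, norm_sub_sq_real]
    simp only [measure_univ, probReal_univ, ENNReal.toReal_one, one_smul, smul_eq_mul, one_mul]
    ring
  -- second part
  intro p hp
  have hpt : ∫ z, obDist (k₀, m k₀, μ1D) z ^ 2 ∂Q = -(m k₀) ^ 2 + (A + B - ‖μ1D‖ ^ 2) := by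
    rw [key]; simp
  constructor
  · intro hmin
    have h1' := hmin (k₀, m k₀, μ1D) (le_of_lt hpos)
    rw [key p, hpt] at h1'
    have hgp : (p.2.1 - m p.1) ^ 2 - (m p.1) ^ 2 + ‖p.2.2 - μ1D‖ ^ 2 ≤ -(m k₀) ^ 2 := by
      linarith
    have hnrm : (0:ℝ) ≤ ‖p.2.2 - μ1D‖ ^ 2 := by positivity
    have hp1 : p.1 = k₀ := by
      by_contra hne
      have hm' : m p.1 < 0 := part1 p.1 hne
      have : p.2.1 * m p.1 ≤ 0 := mul_nonpos_of_nonneg_of_nonpos hp (le_of_lt hm')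
      nlinarith [sq_nonneg p.2.1, sq_nonneg (m k₀)]
    rw [hp1] at hgp
    have h2' : (p.2.1 - m k₀) ^ 2 + ‖p.2.2 - μ1D‖ ^ 2 ≤ 0 := by linarith
    have hsq : (p.2.1 - m k₀) ^ 2 = 0 := by nlinarith [sq_nonneg (p.2.1 - m k₀)]
    have hnr : ‖p.2.2 - μ1D‖ ^ 2 = 0 := by nlinarith [sq_nonneg (p.2.1 - m k₀)]
    refine ⟨hp1, by nlinarith, ?_⟩
    have : ‖p.2.2 - μ1D‖ = 0 := by
      have := sq_eq_zero_iff.mp hnr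
      simpa using this
    rwa [norm_sub_eq_zero_iff] at this
  · rintro ⟨hk, ha, hv⟩ q hq
    rw [key p, key q, hk, ha, hv]
    simp only [sub_self, norm_zero]
    have hq1 : (0:ℝ) ≤ ‖q.2.2 - μ1D‖ ^ 2 := by positivity
    rcases eq_or_ne q.1 k₀ with h | h
    · rw [h]
      nlinarith [sq_nonneg (q.2.1 - m k₀)]
    · have hm' : m q.1 < 0 := part1 q.1 h
      have : q.2.1 * m q.1 ≤ 0 := mul_nonpos_of_nonneg_of_nonpos hq (le_of_lt hm')
      nlinarith [sq_nonneg q.2.1, sq_nonneg (m k₀)]
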